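/- Let ψ be a real polynomial of degree at least 2, m ∈ ℕ, ψ_m the m-th iterate of ψ, ρ_m the degree of ψ_m, and δ_m = (ρ_m − 1)/ρ_m. Then there exists D_m > 0 such that |ψ_m^{(ℓ)}(x)| ≤ D_m (1 + |ψ_m(x)|)^{δ_m} for all x ∈ ℝ and all ℓ ≥ 1. -/

import Mathlib

open Polynomial Filter Asymptotics Finset

/-- The `m`-th compositional iterate of a polynomial (`polyIter ψ 0 = X`). -/
noncomputable def polyIter (ψ : Polynomial ℝ) : ℕ → Polynomial ℝ
  | 0 => Polynomial.X
  | m + 1 => (polyIter ψ m).comp ψ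

lemma polyIter_natDegree (ψ : Polynomial ℝ) : ∀ m : ℕ,
    (polyIter ψ m).natDegree = ψ.natDegree ^ m
  | 0 => by simp [polyIter]
  | m + 1 => by
      rw [polyIter, natDegree_comp, polyIter_natDegree ψ m, pow_succ]

lemma evalBound (Q : Polynomial ℝ) :
    ∃ C : ℝ, 0 < C ∧ ∀ x : ℝ, |Q.eval x| ≤ C * (1 + |x|) ^ Q.natDegree := by
  refine ⟨(∑ i ∈ Finset.range (Q.natDegree + 1), |Q.coeff i|) + 1,
    by positivity, fun x => ?_⟩
  have h1 : (1 : ℝ) ≤ 1 + |x| := le_add_of_nonneg_right (abs_nonneg x)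
  have h0 : (0 : ℝ) ≤ 1 + |x| := by linarith
  calc |Q.eval x|
      = |∑ i ∈ Finset.range (Q.natDegree + 1), Q.coeff i * x ^ i| := by
        rw [Q.eval_eq_sum_range]
    _ ≤ ∑ i ∈ Finset.range (Q.natDegree + 1), |Q.coeff i * x ^ i| :=
        Finset.abs_sum_le_sum_abs _ _
    _ ≤ ∑ i ∈ Finset.range (Q.natDegree + 1), |Q.coeff i| * (1 + |x|) ^ Q.natDegree := by
        refine Finset.sum_le_sum fun i hi => ?_
        rw [abs_mul, abs_pow]
        refine mul_le_mul_of_nonneg_left ?_ (abs_nonneg _)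
        calc |x| ^ i ≤ (1 + |x|) ^ i :=
              pow_le_pow_left₀ (abs_nonneg x) (by linarith) i
          _ ≤ (1 + |x|) ^ Q.natDegree :=
              pow_le_pow_right₀ h1 (by exact Nat.lt_succ_iff.mp (Finset.mem_range.mp hi))
    _ = (∑ i ∈ Finset.range (Q.natDegree + 1), |Q.coeff i|) * (1 + |x|) ^ Q.natDegree :=
        (Finset.sum_mul _ _ _).symm
    _ ≤ ((∑ i ∈ Finset.range (Q.natDegree + 1), |Q.coeff i|) + 1) * (1 + |x|) ^ Q.natDegree := by
        have : (0:ℝ) ≤ (1 + |x|) ^ Q.natDegree := pow_nonneg h0 _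
        nlinarith

lemma lowerBound (P : Polynomial ℝ) (hP : 1 ≤ P.natDegree) :
    ∃ c : ℝ, 0 < c ∧ ∀ x : ℝ, (1 + |x|) ^ P.natDegree ≤ c * (1 + |P.eval x|) := by
  set n := P.natDegree with hn
  have hP0 : P ≠ 0 := fun h => by rw [hn, h, natDegree_zero] at hP; omega
  have hdeg : ((X + C 1 : Polynomial ℝ) ^ n).degree = (n : WithBot ℕ) := by
    rw [degree_pow, degree_X_add_C]; simp
  -- atTop bound
  have h1 : (fun x : ℝ => eval x ((X + C 1) ^ n)) =O[atTop] fun x => eval x P :=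
    isBigO_of_degree_le ((X + C 1 : Polynomial ℝ) ^ n) P (by rw [hdeg, P.degree_eq_natDegree hP0])
  obtain ⟨C1, hC1⟩ := h1.bound
  obtain ⟨a, ha⟩ := (hC1.and (eventually_ge_atTop (0:ℝ))).exists_forall_of_atTop
  -- atBot bound
  set P2 : Polynomial ℝ := P.comp (-X) with hP2
  have hP2deg : P2.natDegree = n := by
    rw [hP2, natDegree_comp, natDegree_neg, natDegree_X, mul_one]
  have hP20 : P2 ≠ 0 := fun h => by rw [h, natDegree_zero] at hP2deg; omega
  have h2 : (fun y : ℝ => eval y ((X + C 1) ^ n)) =O[atTop] fun y => eval y P2 :=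
    isBigO_of_degree_le ((X + C 1 : Polynomial ℝ) ^ n) P2 (by rw [hdeg, P2.degree_eq_natDegree hP20, hP2deg])
  have h3 := h2.comp_tendsto tendsto_neg_atBot_atTop
  obtain ⟨C2, hC2⟩ := h3.bound
  obtain ⟨b, hb⟩ := (hC2.and (eventually_le_atBot (0:ℝ))).exists_forall_of_atBot
  -- middle compact bound
  have hcont : ContinuousOn (fun x : ℝ => (1 + |x|) ^ n) (Set.Icc (min b 0) (max a 0)) := by
    fun_prop
  obtain ⟨M, hM⟩ := (isCompact_Icc).exists_bound_of_continuousOn hcont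
  refine ⟨max C1 0 + max C2 0 + max M 0 + 1, by positivity, fun x => ?_⟩
  have hPx : (0:ℝ) ≤ 1 + |P.eval x| := by positivity
  have hPx1 : (1:ℝ) ≤ 1 + |P.eval x| := le_add_of_nonneg_right (abs_nonneg _)
  have hstep : ∀ c₀ : ℝ, c₀ ≤ max C1 0 + max C2 0 + max M 0 →
      (1 + |x|) ^ n ≤ c₀ * (1 + |P.eval x|) →
      (1 + |x|) ^ n ≤ (max C1 0 + max C2 0 + max M 0 + 1) * (1 + |P.eval x|) := by
    intro c₀ hc₀ hle
    nlinarith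
  rcases le_or_gt x (min b 0) with hx | hx
  · -- atBot regime
    have h := hb x (le_trans hx (min_le_left _ _))
    have hx0 : x ≤ 0 := h.2
    have h' := h.1
    simp only [Function.comp_apply] at h'
    have he1 : eval (-x) ((X + C 1 : Polynomial ℝ) ^ n) = (1 + |x|) ^ n := by
      rw [eval_pow, eval_add, eval_X, eval_C, abs_of_nonpos hx0]; ring_nf
    have he2 : eval (-x) P2 = P.eval x := by
      rw [hP2, eval_comp, eval_neg, eval_X, neg_neg]
    rw [he1, he2, Real.norm_eq_abs, Real.norm_eq_abs] at h'
    have h0 : (0:ℝ) ≤ 1 + |x| := by positivity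
    rw [abs_of_nonneg (pow_nonneg h0 n)] at h'
    refine hstep (max C2 0) (by nlinarith [le_max_right C1 (0:ℝ), le_max_right M (0:ℝ)]) ?_
    calc (1 + |x|) ^ n ≤ C2 * |P.eval x| := h'
      _ ≤ max C2 0 * |P.eval x| :=
          mul_le_mul_of_nonneg_right (le_max_left _ _) (abs_nonneg _)
      _ ≤ max C2 0 * (1 + |P.eval x|) :=
          mul_le_mul_of_nonneg_left (by linarith [abs_nonneg (P.eval x)]) (le_max_right _ _)
  · rcases le_or_gt (max a 0) x with hx2 | hx2
    · -- atTop regime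
      have h := ha x (le_trans (le_max_left _ _) hx2)
      have hx0 : (0:ℝ) ≤ x := le_trans (le_max_right _ _) hx2
      have h' := h.1
      have he1 : eval x ((X + C 1 : Polynomial ℝ) ^ n) = (1 + |x|) ^ n := by
        rw [eval_pow, eval_add, eval_X, eval_C, abs_of_nonneg hx0]; ring_nf
      rw [he1, Real.norm_eq_abs, Real.norm_eq_abs] at h'
      have h0 : (0:ℝ) ≤ 1 + |x| := by positivity
      rw [abs_of_nonneg (pow_nonneg h0 n)] at h'
      refine hstep (max C1 0) (by nlinarith [le_max_right C2 (0:ℝ), le_max_right M (0:ℝ)]) ?_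
      calc (1 + |x|) ^ n ≤ C1 * |P.eval x| := h'
        _ ≤ max C1 0 * |P.eval x| :=
            mul_le_mul_of_nonneg_right (le_max_left _ _) (abs_nonneg _)
        _ ≤ max C1 0 * (1 + |P.eval x|) :=
            mul_le_mul_of_nonneg_left (by linarith [abs_nonneg (P.eval x)]) (le_max_right _ _)
    · -- middle
      have h := hM x ⟨hx.le, hx2.le⟩
      rw [Real.norm_eq_abs] at h
      have h0 : (0:ℝ) ≤ 1 + |x| := by positivity
      rw [abs_of_nonneg (pow_nonneg h0 n)] at h
      refine hstep (max M 0) (by nlinarith [le_max_right C1 (0:ℝ), le_max_right C2 (0:ℝ)]) ?_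
      calc (1 + |x|) ^ n ≤ M := h
        _ ≤ max M 0 * 1 := by rw [mul_one]; exact le_max_left _ _
        _ ≤ max M 0 * (1 + |P.eval x|) :=
            mul_le_mul_of_nonneg_left hPx1 (le_max_right _ _)

lemma coreBound (P Q : Polynomial ℝ) (hP : 1 ≤ P.natDegree)
    (hQ : Q.natDegree + 1 ≤ P.natDegree) :
    ∃ D : ℝ, 0 < D ∧ ∀ x : ℝ, |Q.eval x| ≤
      D * (1 + |P.eval x|) ^ (((P.natDegree : ℝ) - 1) / (P.natDegree : ℝ)) := by
  obtain ⟨Ca, hCa, hCab⟩ := evalBound Q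
  obtain ⟨c, hc, hcb⟩ := lowerBound P hP
  set n := P.natDegree with hn
  set δ : ℝ := ((n : ℝ) - 1) / (n : ℝ) with hδ
  have hn1 : (1:ℝ) ≤ (n:ℝ) := by exact_mod_cast hP
  have hδ0 : 0 ≤ δ := div_nonneg (by linarith) (by linarith)
  refine ⟨Ca * c ^ δ, by positivity, fun x => ?_⟩
  have hx : (0:ℝ) ≤ 1 + |x| := by positivity
  have hx1 : (1:ℝ) ≤ 1 + |x| := le_add_of_nonneg_right (abs_nonneg x)
  have hPx : (0:ℝ) ≤ 1 + |P.eval x| := by positivity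
  have key : ((1 + |x| : ℝ)) ^ (n - 1 : ℕ) = ((1 + |x|) ^ n) ^ δ := by
    rw [← Real.rpow_natCast ((1 + |x|)) n, ← Real.rpow_mul hx]
    have : (n : ℝ) * δ = ((n - 1 : ℕ) : ℝ) := by
      rw [Nat.cast_sub hP, hδ]
      field_simp
      norm_num
    rw [this, Real.rpow_natCast]
  calc |Q.eval x| ≤ Ca * (1 + |x|) ^ Q.natDegree := hCab x
    _ ≤ Ca * (1 + |x|) ^ (n - 1 : ℕ) := by
        refine mul_le_mul_of_nonneg_left (pow_le_pow_right₀ hx1 ?_) hCa.le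
        omega
    _ = Ca * (((1 + |x|) ^ n) ^ δ) := by rw [key]
    _ ≤ Ca * ((c * (1 + |P.eval x|)) ^ δ) := by
        refine mul_le_mul_of_nonneg_left ?_ hCa.le
        exact Real.rpow_le_rpow (pow_nonneg hx n) (hcb x) hδ0
    _ = Ca * c ^ δ * (1 + |P.eval x|) ^ δ := by
        rw [Real.mul_rpow hc.le hPx, mul_assoc]

theorem stmt_5 (ψ : Polynomial ℝ) (hd : 2 ≤ ψ.natDegree) (m : ℕ) (hm : 1 ≤ m) :
    ∃ D : ℝ, 0 < D ∧ ∀ x : ℝ, ∀ ℓ : ℕ, 1 ≤ ℓ →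
      |((Polynomial.derivative^[ℓ]) (polyIter ψ m)).eval x| ≤
        D * (1 + |(polyIter ψ m).eval x|) ^
          ((((polyIter ψ m).natDegree : ℝ) - 1) / ((polyIter ψ m).natDegree : ℝ)) := by
  set P := polyIter ψ m with hPdef
  have hρ : 2 ≤ P.natDegree := by
    rw [hPdef, polyIter_natDegree]
    calc 2 = 2 ^ 1 := rfl
      _ ≤ 2 ^ m := Nat.pow_le_pow_right (by norm_num) hm
      _ ≤ ψ.natDegree ^ m := Nat.pow_le_pow_left hd m
  set ρ := P.natDegree with hρdef
  have hQdeg : ∀ k : ℕ, ((derivative^[k + 1]) P).natDegree + 1 ≤ ρ := by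
    intro k
    have h1 : ((derivative^[k + 1]) P).natDegree ≤ ρ - (k + 1) :=
      natDegree_iterate_derivative P (k + 1)
    omega
  have hcore : ∀ k : ℕ, ∃ D : ℝ, 0 < D ∧ ∀ x : ℝ,
      |((derivative^[k + 1]) P).eval x| ≤
        D * (1 + |P.eval x|) ^ (((ρ : ℝ) - 1) / (ρ : ℝ)) :=
    fun k => coreBound P _ (by omega) (hQdeg k)
  choose Dk hDk hDkb using hcore
  refine ⟨∑ k ∈ Finset.range ρ, Dk k,
    Finset.sum_pos (fun k _ => hDk k) (by rw [Finset.nonempty_range_iff]; omega),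
    fun x ℓ hℓ => ?_⟩
  have hrnn : (0:ℝ) ≤ (1 + |P.eval x|) ^ (((ρ : ℝ) - 1) / (ρ : ℝ)) :=
    Real.rpow_nonneg (by positivity) _
  by_cases hcase : ℓ ≤ ρ
  · have hk : ℓ - 1 ∈ Finset.range ρ := by rw [Finset.mem_range]; omega
    have hrw : ℓ - 1 + 1 = ℓ := by omega
    calc |((derivative^[ℓ]) P).eval x|
        = |((derivative^[ℓ - 1 + 1]) P).eval x| := by rw [hrw]
      _ ≤ Dk (ℓ - 1) * (1 + |P.eval x|) ^ (((ρ : ℝ) - 1) / (ρ : ℝ)) := hDkb (ℓ - 1) x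
      _ ≤ (∑ k ∈ Finset.range ρ, Dk k) * (1 + |P.eval x|) ^ (((ρ : ℝ) - 1) / (ρ : ℝ)) :=
          mul_le_mul_of_nonneg_right
            (Finset.single_le_sum (fun i _ => (hDk i).le) hk) hrnn
  · have hz : (derivative^[ℓ]) P = 0 := iterate_derivative_eq_zero (by omega)
    rw [hz]
    simp only [eval_zero, abs_zero]
    have hD : (0:ℝ) < ∑ k ∈ Finset.range ρ, Dk k :=
      Finset.sum_pos (fun k _ => hDk k) (by rw [Finset.nonempty_range_iff]; omega)
    positivity
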